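/- Let P and Q be probability distributions on [n] with Q(i) > 0 for all i, satisfying the classical k-substate property, and let M : [n] → [0,1] be any test (fuzzy event). Set p = Σᵢ M(i)P(i), q = Σᵢ M(i)Q(i), and take r = 2/p (assuming p > 0). If P_r witnesses the substate property for this r, then p_r := Σᵢ M(i)P_r(i) ≥ p/2 and q ≥ (1/2)·p/2^{rk+1}, hence p log₂(p/q) ≤ 2k + 2. -/

import Mathlib

open Finset

/-- The classical `k`-substate property. -/
def SubstateProperty (n : ℕ) (P Q : Fin n → ℝ) (k : ℝ) : Prop :=
  ∀ r : ℝ, 1 < r → ∃ Pr : Fin n → ℝ,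
    (∀ i, 0 ≤ Pr i) ∧ (∑ i, Pr i = 1) ∧
    (∑ i, |P i - Pr i|) ≤ 2 / r ∧
    ∀ i, (1 - 1 / r) * Pr i / (2 : ℝ) ^ (r * k) ≤ Q i

/-- Let `P`, `Q` satisfy the classical `k`-substate property, `M : [n] → [0,1]`
a fuzzy test, `p = ∑ M i * P i > 0`, `q = ∑ M i * Q i`, and `r = 2/p`. If
`P_r` is a witness of the substate property for this `r`, then
`p_r = ∑ M i * P_r i ≥ p/2`, `q ≥ (1/2) * p / 2^(r*k+1)`, and hence
`p * log₂ (p/q) ≤ 2k + 2`. -/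
theorem stmt17 (n : ℕ) (P Q : Fin n → ℝ)
    (hP0 : ∀ i, 0 ≤ P i) (hP1 : ∑ i, P i = 1)
    (hQ0 : ∀ i, 0 < Q i) (hQ1 : ∑ i, Q i = 1)
    (k : ℝ) (hk : 0 ≤ k) (hsub : SubstateProperty n P Q k)
    (M : Fin n → ℝ) (hM : ∀ i, 0 ≤ M i ∧ M i ≤ 1)
    (p q r : ℝ)
    (hp : p = ∑ i, M i * P i) (hppos : 0 < p)
    (hq : q = ∑ i, M i * Q i)
    (hr : r = 2 / p)
    (Pr : Fin n → ℝ)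
    (hPr0 : ∀ i, 0 ≤ Pr i) (hPr1 : ∑ i, Pr i = 1)
    (hPrclose : (∑ i, |P i - Pr i|) ≤ 2 / r)
    (hPrsub : ∀ i, (1 - 1 / r) * Pr i / (2 : ℝ) ^ (r * k) ≤ Q i) :
    (∑ i, M i * Pr i) ≥ p / 2 ∧
    q ≥ (1 / 2) * (p / (2 : ℝ) ^ (r * k + 1)) ∧
    p * Real.logb 2 (p / q) ≤ 2 * k + 2 := by

  have hp1 : p ≤ 1 := by
    rw [hp, ← hP1]
    apply Finset.sum_le_sum
    intro i _
    calc M i * P i ≤ 1 * P i := mul_le_mul_of_nonneg_right (hM i).2 (hP0 i)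
      _ = P i := one_mul _
  have hrp : 2 / r = p := by rw [hr]; field_simp
  have hrpos : 0 < r := by rw [hr]; positivity
  -- key half-L1 bound
  have hkey : p - (∑ i, M i * Pr i) ≤ p / 2 := by
    have h1 : ∑ i, (P i - Pr i) = 0 := by
      rw [Finset.sum_sub_distrib, hP1, hPr1]; ring
    have h2 : 2 * (p - ∑ i, M i * Pr i) = ∑ i, (2 * M i - 1) * (P i - Pr i) := by
      rw [hp]
      rw [show (∑ i, (2 * M i - 1) * (P i - Pr i)) =
        2 * ((∑ i, M i * P i) - ∑ i, M i * Pr i) - ∑ i, (P i - Pr i) by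
          rw [← Finset.sum_sub_distrib, Finset.mul_sum, ← Finset.sum_sub_distrib]
          apply Finset.sum_congr rfl; intro i _; ring]
      rw [h1]; ring
    have h3 : ∑ i, (2 * M i - 1) * (P i - Pr i) ≤ ∑ i, |P i - Pr i| := by
      apply Finset.sum_le_sum
      intro i _
      calc (2 * M i - 1) * (P i - Pr i) ≤ |(2 * M i - 1) * (P i - Pr i)| := le_abs_self _
        _ = |2 * M i - 1| * |P i - Pr i| := abs_mul _ _
        _ ≤ 1 * |P i - Pr i| := by
            apply mul_le_mul_of_nonneg_right _ (abs_nonneg _)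
            rw [abs_le]; constructor <;> nlinarith [(hM i).1, (hM i).2]
        _ = |P i - Pr i| := one_mul _
    have h4 : ∑ i, |P i - Pr i| ≤ p := hrp ▸ hPrclose
    linarith
  have hpr : (∑ i, M i * Pr i) ≥ p / 2 := by linarith
  have hpow : (0:ℝ) < (2:ℝ) ^ (r * k) := Real.rpow_pos_of_pos (by norm_num) _
  have hone : (1:ℝ) / 2 ≤ 1 - 1 / r := by
    rw [hr]
    rw [one_div_div]
    linarith
  have hqb : q ≥ (1 - 1 / r) / (2:ℝ) ^ (r * k) * (∑ i, M i * Pr i) := by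
    rw [hq, Finset.mul_sum]
    apply Finset.sum_le_sum
    intro i _
    have := hPrsub i
    have hMi := (hM i).1
    have hPri := hPr0 i
    calc (1 - 1 / r) / (2:ℝ) ^ (r * k) * (M i * Pr i)
        = M i * ((1 - 1 / r) * Pr i / (2:ℝ) ^ (r * k)) := by ring
      _ ≤ M i * Q i := by
          apply mul_le_mul_of_nonneg_left this hMi
  have hqlow : q ≥ (1 / 2) * (p / (2 : ℝ) ^ (r * k + 1)) := by
    have h21 : (2:ℝ) ^ (r * k + 1) = (2:ℝ) ^ (r * k) * 2 := by
      rw [Real.rpow_add (by norm_num), Real.rpow_one]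
    rw [h21]
    have hhalf : (1 - 1 / r) / (2:ℝ) ^ (r * k) * (∑ i, M i * Pr i)
        ≥ (1/2) / (2:ℝ) ^ (r * k) * (p / 2) := by
      apply mul_le_mul
      · apply div_le_div_of_nonneg_right hone hpow.le
      · exact hpr
      · positivity
      · positivity
    calc (1 / 2) * (p / ((2:ℝ) ^ (r * k) * 2)) = (1/2) / (2:ℝ) ^ (r * k) * (p / 2) := by
          field_simp
      _ ≤ (1 - 1 / r) / (2:ℝ) ^ (r * k) * (∑ i, M i * Pr i) := hhalf
      _ ≤ q := hqb
  refine ⟨hpr, hqlow, ?_⟩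
  have hqpos : 0 < q := lt_of_lt_of_le (by positivity) hqlow
  have hratio : p / q ≤ (2:ℝ) ^ (r * k + 2) := by
    have h22 : (2:ℝ) ^ (r * k + 2) = (2:ℝ) ^ (r * k + 1) * 2 := by
      rw [show r * k + 2 = (r * k + 1) + 1 by ring, Real.rpow_add (by norm_num), Real.rpow_one]
    have hp1' : (0:ℝ) < (2:ℝ) ^ (r * k + 1) := Real.rpow_pos_of_pos (by norm_num) _
    rw [div_le_iff₀ hqpos, h22]
    have : (1 / 2) * (p / (2 : ℝ) ^ (r * k + 1)) * ((2:ℝ) ^ (r * k + 1) * 2) = p := by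
      field_simp
    nlinarith [mul_le_mul_of_nonneg_right hqlow (le_of_lt (by positivity : (0:ℝ) < (2:ℝ) ^ (r * k + 1) * 2))]
  have hlog : Real.logb 2 (p / q) ≤ r * k + 2 := by
    calc Real.logb 2 (p / q) ≤ Real.logb 2 ((2:ℝ) ^ (r * k + 2)) :=
          Real.logb_le_logb_of_le (by norm_num) (by positivity) hratio
      _ = r * k + 2 := Real.logb_rpow (by norm_num) (by norm_num)
  have hrk : p * r = 2 := by rw [hr]; field_simp
  calc p * Real.logb 2 (p / q) ≤ p * (r * k + 2) :=
        mul_le_mul_of_nonneg_left hlog (le_of_lt hppos)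
    _ = p * r * k + 2 * p := by ring
    _ = 2 * k + 2 * p := by rw [hrk]
    _ ≤ 2 * k + 2 := by linarith
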